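/- arXiv:2203.06645 — 6 statements merged into one kernel-verified Lean document; each statement's English description precedes it below -/
import Mathlib

section
/- For every x ∈ E₁ ⊗ E₂, one has B(x, x) = 0 if and only if x is a simple tensor, i.e., x = e₁ ⊗ e₂ for some e₁ ∈ E₁ and e₂ ∈ E₂. -/
open TensorProduct

lemma aux_pair (K : Type*) [Field K] (E : Type*) [AddCommGroup E] [Module K E]
    [FiniteDimensional K E] (hE : Module.finrank K E = 2)
    (ω : E →ₗ[K] E →ₗ[K] K) (halt : ∀ x, ω x x = 0) (hne : ω ≠ 0) :
    ∃ (b : Module.Basis (Fin 2) K E), ω (b 0) (b 1) = 1 ∧ ω (b 1) (b 0) = -1 := by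
  have hskew : ∀ x y, ω x y = - ω y x := by
    intro x y
    have h := halt (x + y)
    simp only [map_add, LinearMap.add_apply, halt] at h
    linear_combination h
  obtain ⟨e, f₀, hef₀⟩ : ∃ e f, ω e f ≠ 0 := by
    by_contra h
    push_neg at h
    exact hne (by ext x y; simp [h])
  set f : E := (ω e f₀)⁻¹ • f₀ with hf
  have hef : ω e f = 1 := by
    simp [hf, map_smul, inv_mul_cancel₀ hef₀]
  have hfe : ω f e = -1 := by rw [hskew, hef]
  have li : LinearIndependent K ![e, f] := by
    rw [LinearIndependent.pair_iff]
    intro s t hst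
    have h1 := congrArg (fun z => ω e z) hst
    have h2 := congrArg (fun z => ω z f) hst
    simp only [map_add, map_smul, LinearMap.add_apply, LinearMap.smul_apply,
      LinearMap.map_smul₂, LinearMap.map_add₂, halt, hef, smul_eq_mul, mul_zero, mul_one,
      zero_add, add_zero, map_zero, LinearMap.zero_apply] at h1 h2
    exact ⟨h2, h1⟩
  refine ⟨basisOfLinearIndependentOfCardEqFinrank li (by simp [hE]), ?_, ?_⟩ <;>
    simp [coe_basisOfLinearIndependentOfCardEqFinrank, hef, hfe]

/-- For the orthogonal form `B` on `E₁ ⊗ E₂` (with `E₁, E₂` two-dimensional and `ω₁, ω₂` nonzero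
alternating forms), a vector `x` is isotropic (`B(x,x) = 0`) if and only if `x` is a simple
tensor. -/
theorem stmt_1 (K : Type*) [Field K] (hK2 : (2 : K) ≠ 0)
    (E₁ E₂ : Type*) [AddCommGroup E₁] [Module K E₁] [AddCommGroup E₂] [Module K E₂]
    [FiniteDimensional K E₁] [FiniteDimensional K E₂]
    (hE₁ : Module.finrank K E₁ = 2) (hE₂ : Module.finrank K E₂ = 2)
    (ω₁ : E₁ →ₗ[K] E₁ →ₗ[K] K) (ω₂ : E₂ →ₗ[K] E₂ →ₗ[K] K)
    (hω₁alt : ∀ x, ω₁ x x = 0) (hω₂alt : ∀ y, ω₂ y y = 0)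
    (hω₁ne : ω₁ ≠ 0) (hω₂ne : ω₂ ≠ 0)
    (B : E₁ ⊗[K] E₂ →ₗ[K] E₁ ⊗[K] E₂ →ₗ[K] K)
    (hB : ∀ (e₁ f₁ : E₁) (e₂ f₂ : E₂),
      B (e₁ ⊗ₜ[K] e₂) (f₁ ⊗ₜ[K] f₂) = ω₁ e₁ f₁ * ω₂ e₂ f₂) :
    ∀ x : E₁ ⊗[K] E₂, B x x = 0 ↔ ∃ (e₁ : E₁) (e₂ : E₂), x = e₁ ⊗ₜ[K] e₂ := by
  obtain ⟨b₁, h1ef, h1fe⟩ := aux_pair K E₁ hE₁ ω₁ hω₁alt hω₁ne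
  obtain ⟨b₂, h2ef, h2fe⟩ := aux_pair K E₂ hE₂ ω₂ hω₂alt hω₂ne
  set e := b₁ 0; set f := b₁ 1; set e' := b₂ 0; set f' := b₂ 1
  intro x
  set bT := b₁.tensorProduct b₂ with hbT
  set a := bT.repr x (0, 0)
  set b := bT.repr x (0, 1)
  set c := bT.repr x (1, 0)
  set d := bT.repr x (1, 1)
  have hx : x = a • (e ⊗ₜ[K] e') + b • (e ⊗ₜ[K] f') + c • (f ⊗ₜ[K] e') + d • (f ⊗ₜ[K] f') := by
    conv_lhs => rw [← bT.sum_repr x]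
    rw [Fintype.sum_prod_type]
    simp only [Fin.sum_univ_two, hbT, Module.Basis.tensorProduct_apply]
    abel
  have hBx : B x x = 2 * (a * d - b * c) := by
    conv_lhs => rw [hx]
    simp only [map_add, map_smul, LinearMap.add_apply, LinearMap.smul_apply, hB,
      hω₁alt, hω₂alt, h1ef, h1fe, h2ef, h2fe, smul_eq_mul]
    ring
  constructor
  · intro h
    have had : a * d = b * c := by
      rw [hBx] at h
      rcases mul_eq_zero.mp h with h2 | h0
      · exact absurd h2 hK2
      · linear_combination h0
    by_cases ha : a = 0
    · have hbc : b * c = 0 := by rw [← had, ha, zero_mul]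
      rcases mul_eq_zero.mp hbc with hb | hc
      · refine ⟨f, c • e' + d • f', ?_⟩
        rw [hx, ha, hb]
        simp only [tmul_add, tmul_smul, zero_smul, zero_add]
      · refine ⟨b • e + d • f, f', ?_⟩
        rw [hx, ha, hc]
        simp only [add_tmul, ← smul_tmul', zero_smul, zero_add, add_zero]
    · refine ⟨a • e + c • f, e' + (b / a) • f', ?_⟩
      rw [hx]
      simp only [tmul_add, add_tmul, tmul_smul, ← smul_tmul', smul_smul]
      match_scalars <;> field_simp
      linear_combination had
  · rintro ⟨u, v, rfl⟩
    rw [hB, hω₁alt, zero_mul]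
end

section
/- Let Ψ : E₁ ⊗ E₂ → Hom_K(E₁, E₂) be the linear map determined on simple tensors by Ψ(e₁ ⊗ e₂)(x) = ω₁(x, e₁) · e₂. Then Ψ is a linear isomorphism, and for every v ∈ E₁ ⊗ E₂: B(v, v) = 0 if and only if the linear map Ψ(v) has rank at most 1, and B(v, v) ≠ 0 if and only if Ψ(v) : E₁ → E₂ is bijective. -/
open TensorProduct

/-- The map `Ψ : E₁ ⊗ E₂ → Hom(E₁, E₂)`, `Ψ(e₁ ⊗ e₂)(x) = ω₁(x, e₁) • e₂`, is a linear
isomorphism; moreover `B(v,v) = 0` iff `Ψ(v)` has rank at most one, and `B(v,v) ≠ 0` iff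
`Ψ(v)` is bijective. -/
theorem stmt_2 (K : Type*) [Field K] (hK2 : (2 : K) ≠ 0)
    (E₁ E₂ : Type*) [AddCommGroup E₁] [Module K E₁] [AddCommGroup E₂] [Module K E₂]
    [FiniteDimensional K E₁] [FiniteDimensional K E₂]
    (hE₁ : Module.finrank K E₁ = 2) (hE₂ : Module.finrank K E₂ = 2)
    (ω₁ : E₁ →ₗ[K] E₁ →ₗ[K] K) (ω₂ : E₂ →ₗ[K] E₂ →ₗ[K] K)
    (hω₁alt : ∀ x, ω₁ x x = 0) (hω₂alt : ∀ y, ω₂ y y = 0)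
    (hω₁ne : ω₁ ≠ 0) (hω₂ne : ω₂ ≠ 0)
    (B : E₁ ⊗[K] E₂ →ₗ[K] E₁ ⊗[K] E₂ →ₗ[K] K)
    (hB : ∀ (e₁ f₁ : E₁) (e₂ f₂ : E₂),
      B (e₁ ⊗ₜ[K] e₂) (f₁ ⊗ₜ[K] f₂) = ω₁ e₁ f₁ * ω₂ e₂ f₂)
    (Ψ : E₁ ⊗[K] E₂ →ₗ[K] (E₁ →ₗ[K] E₂))
    (hΨ : ∀ (e₁ : E₁) (e₂ : E₂) (x : E₁), Ψ (e₁ ⊗ₜ[K] e₂) x = ω₁ x e₁ • e₂) :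
    Function.Bijective Ψ ∧
    ∀ v : E₁ ⊗[K] E₂,
      (B v v = 0 ↔ Module.finrank K (LinearMap.range (Ψ v)) ≤ 1) ∧
      (B v v ≠ 0 ↔ Function.Bijective (Ψ v)) := by
  classical
  -- skew-symmetry
  have skew₁ : ∀ u w : E₁, ω₁ w u = -ω₁ u w := by
    intro u w
    have h := hω₁alt (u + w)
    simp only [map_add, LinearMap.add_apply, hω₁alt] at h
    linear_combination h
  have skew₂ : ∀ u w : E₂, ω₂ w u = -ω₂ u w := by
    intro u w
    have h := hω₂alt (u + w)
    simp only [map_add, LinearMap.add_apply, hω₂alt] at h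
    linear_combination h
  -- a symplectic-like pair in E₁
  obtain ⟨a, b₀, hab₀⟩ : ∃ a b : E₁, ω₁ a b ≠ 0 := by
    by_contra h
    push_neg at h
    exact hω₁ne (by ext u w; simp [h])
  set b : E₁ := (ω₁ a b₀)⁻¹ • b₀ with hbdef
  have hab : ω₁ a b = 1 := by
    simp only [hbdef, map_smul, smul_eq_mul]
    field_simp
  have hba : ω₁ b a = -1 := by rw [skew₁, hab]
  have haa : ω₁ a a = 0 := hω₁alt a
  have hbb : ω₁ b b = 0 := hω₁alt b
  have hli : LinearIndependent K ![a, b] := by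
    rw [LinearIndependent.pair_iff]
    intro s t hst
    constructor
    · have := congrArg (fun z => ω₁ z b) hst
      simpa [hab, hbb, smul_eq_mul] using this
    · have := congrArg (fun z => ω₁ a z) hst
      simpa [haa, hab, smul_eq_mul] using this
  have cardeq : Fintype.card (Fin 2) = Module.finrank K E₁ := by simp [hE₁]
  let ba : Module.Basis (Fin 2) K E₁ := basisOfLinearIndependentOfCardEqFinrank hli cardeq
  have hba0 : ba 0 = a := by
    simp [ba, coe_basisOfLinearIndependentOfCardEqFinrank]
  have hba1 : ba 1 = b := by
    simp [ba, coe_basisOfLinearIndependentOfCardEqFinrank]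
  have hrepr : ∀ w : E₁, w = (ba.repr w 0) • a + (ba.repr w 1) • b := by
    intro w
    have h := ba.sum_repr w
    rw [Fin.sum_univ_two, hba0, hba1] at h
    exact h.symm
  -- decomposition of tensors
  have decomp : ∀ v : E₁ ⊗[K] E₂, ∃ x y : E₂, v = a ⊗ₜ[K] x + b ⊗ₜ[K] y := by
    intro v
    induction v using TensorProduct.induction_on with
    | zero => exact ⟨0, 0, by simp⟩
    | tmul e z =>
      refine ⟨(ba.repr e 0) • z, (ba.repr e 1) • z, ?_⟩
      conv_lhs => rw [hrepr e]
      rw [add_tmul, smul_tmul, smul_tmul]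
    | add u w hu hw =>
      obtain ⟨x1, y1, h1⟩ := hu
      obtain ⟨x2, y2, h2⟩ := hw
      refine ⟨x1 + x2, y1 + y2, ?_⟩
      rw [h1, h2, tmul_add, tmul_add]
      abel
  -- key: linear independence in E₂ gives nonzero pairing
  have indep_ne : ∀ x y : E₂, LinearIndependent K ![x, y] → ω₂ x y ≠ 0 := by
    intro x y hxy h0
    have cardeq₂ : Fintype.card (Fin 2) = Module.finrank K E₂ := by simp [hE₂]
    let bc : Module.Basis (Fin 2) K E₂ := basisOfLinearIndependentOfCardEqFinrank hxy cardeq₂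
    have hbc0 : bc 0 = x := by
      simp [bc, coe_basisOfLinearIndependentOfCardEqFinrank]
    have hbc1 : bc 1 = y := by
      simp [bc, coe_basisOfLinearIndependentOfCardEqFinrank]
    apply hω₂ne
    apply bc.ext
    intro i
    apply bc.ext
    intro j
    fin_cases i <;> fin_cases j <;>
      simp [hbc0, hbc1, hω₂alt, h0, skew₂ x y]
  -- applied value of Ψ v
  have main : ∀ v : E₁ ⊗[K] E₂,
      (B v v = 0 ↔ Module.finrank K (LinearMap.range (Ψ v)) ≤ 1) ∧
      (B v v ≠ 0 ↔ Function.Bijective (Ψ v)) := by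
    intro v
    obtain ⟨x, y, hv⟩ := decomp v
    have hΨa : Ψ v a = y := by
      rw [hv, map_add]
      simp [LinearMap.add_apply, hΨ, haa, hab]
    have hΨb : Ψ v b = -x := by
      rw [hv, map_add]
      simp [LinearMap.add_apply, hΨ, hba, hbb]
    have hΨw : ∀ w : E₁, Ψ v w = (ba.repr w 0) • y - (ba.repr w 1) • x := by
      intro w
      conv_lhs => rw [hrepr w]
      rw [map_add, map_smul, map_smul, hΨa, hΨb, smul_neg, sub_eq_add_neg]
    have hBvv : B v v = 2 * ω₂ x y := by
      rw [hv]
      simp only [map_add, LinearMap.add_apply, hB, haa, hab, hba, hbb,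
        hω₂alt, skew₂ x y]
      ring
    -- case analysis on ω₂ x y
    by_cases h0 : ω₂ x y = 0
    · -- degenerate case: rank ≤ 1, not bijective
      have hdep : ¬ LinearIndependent K ![x, y] := fun h => indep_ne x y h h0
      rw [LinearIndependent.pair_iff] at hdep
      push_neg at hdep
      obtain ⟨s, t, hst, hne⟩ := hdep
      have hrank : Module.finrank K (LinearMap.range (Ψ v)) ≤ 1 := by
        have rank_le : ∀ u : E₂, LinearMap.range (Ψ v) ≤ Submodule.span K {u} →
            Module.finrank K (LinearMap.range (Ψ v)) ≤ 1 := by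
          intro u hle
          refine le_trans (Submodule.finrank_mono hle) ?_
          by_cases hu : u = 0
          · rw [hu, Submodule.span_zero_singleton]
            simp
          · rw [finrank_span_singleton hu]
        by_cases ht' : t = 0
        · -- then s ≠ 0 and x ∈ span {y}
          have hs : s ≠ 0 := by
            intro hs0
            exact hne hs0 ht'
          have hx : x = (-s⁻¹ * t) • y := by
            have hsx : s • x = -(t • y) := by
              rw [eq_neg_iff_add_eq_zero]; exact hst
            have h1 : x = s⁻¹ • (s • x) := by
              rw [← mul_smul, inv_mul_cancel₀ hs, one_smul]
            rw [h1, hsx, smul_neg, ← mul_smul, ← neg_smul, neg_mul]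
          refine rank_le y ?_
          rintro z ⟨w, rfl⟩
          rw [hΨw w, hx]
          refine sub_mem (Submodule.smul_mem _ _ (Submodule.mem_span_singleton_self y)) ?_
          rw [smul_comm]
          exact Submodule.smul_mem _ _
            (Submodule.smul_mem _ _ (Submodule.mem_span_singleton_self y))
        · -- t ≠ 0 : y ∈ span {x}
          have hy : y = (-t⁻¹ * s) • x := by
            have hty : t • y = -(s • x) := by
              rw [eq_neg_iff_add_eq_zero, add_comm]; exact hst
            have h1 : y = t⁻¹ • (t • y) := by
              rw [← mul_smul, inv_mul_cancel₀ ht', one_smul]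
            rw [h1, hty, smul_neg, ← mul_smul, ← neg_smul, neg_mul]
          refine rank_le x ?_
          rintro z ⟨w, rfl⟩
          rw [hΨw w, hy]
          refine sub_mem ?_ (Submodule.smul_mem _ _ (Submodule.mem_span_singleton_self x))
          rw [smul_comm]
          exact Submodule.smul_mem _ _
            (Submodule.smul_mem _ _ (Submodule.mem_span_singleton_self x))
      have hnbij : ¬ Function.Bijective (Ψ v) := by
        intro hbij
        have : LinearMap.range (Ψ v) = ⊤ := LinearMap.range_eq_top.mpr hbij.2
        rw [this, finrank_top, hE₂] at hrank
        omega
      constructor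
      · simp [hBvv, h0, hrank]
      · simp [hBvv, h0, hnbij]
    · -- nondegenerate case: bijective, rank = 2
      have hinj : Function.Injective (Ψ v) := by
        rw [← LinearMap.ker_eq_bot]
        rw [Submodule.eq_bot_iff]
        intro w hw
        rw [LinearMap.mem_ker, hΨw w, sub_eq_zero] at hw
        have h2 : ba.repr w 0 = 0 := by
          have := congrArg (fun z => ω₂ x z) hw
          simp only [map_smul, smul_eq_mul, hω₂alt, mul_zero] at this
          rcases mul_eq_zero.mp this with h | h
          · exact h
          · exact absurd h h0
        have h1 : ba.repr w 1 = 0 := by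
          have := congrArg (fun z => ω₂ z y) hw
          simp only [map_smul, LinearMap.smul_apply, smul_eq_mul, hω₂alt,
            mul_zero, zero_mul] at this
          rcases mul_eq_zero.mp this.symm with h | h
          · exact h
          · exact absurd h h0
        rw [hrepr w, h1, h2, zero_smul, zero_smul, add_zero]
      have hbij : Function.Bijective (Ψ v) :=
        ⟨hinj, (LinearMap.injective_iff_surjective_of_finrank_eq_finrank
          (by rw [hE₁, hE₂])).mp hinj⟩
      have hrank : ¬ Module.finrank K (LinearMap.range (Ψ v)) ≤ 1 := by
        have : LinearMap.range (Ψ v) = ⊤ := LinearMap.range_eq_top.mpr hbij.2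
        rw [this, finrank_top, hE₂]
        omega
      constructor
      · constructor
        · intro hB0
          rw [hBvv] at hB0
          rcases mul_eq_zero.mp hB0 with h | h
          · exact absurd h hK2
          · exact absurd h h0
        · intro h
          exact absurd h hrank
      · constructor
        · intro _; exact hbij
        · intro _
          rw [hBvv]
          exact mul_ne_zero hK2 h0
  refine ⟨?_, main⟩
  -- Ψ is bijective
  have hinjΨ : Function.Injective Ψ := by
    rw [← LinearMap.ker_eq_bot, Submodule.eq_bot_iff]
    intro v hv
    rw [LinearMap.mem_ker] at hv
    obtain ⟨x, y, hvd⟩ := decomp v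
    have hΨa : Ψ v a = y := by
      rw [hvd, map_add]
      simp [LinearMap.add_apply, hΨ, haa, hab]
    have hΨb : Ψ v b = -x := by
      rw [hvd, map_add]
      simp [LinearMap.add_apply, hΨ, hba, hbb]
    rw [hv] at hΨa hΨb
    simp only [LinearMap.zero_apply] at hΨa hΨb
    have hx : x = 0 := by
      have := hΨb.symm
      rwa [neg_eq_zero] at this
    have hy : y = 0 := hΨa.symm
    rw [hvd, hx, hy, tmul_zero, tmul_zero, add_zero]
  refine ⟨hinjΨ, ?_⟩
  exact (LinearMap.injective_iff_surjective_of_finrank_eq_finrank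
    (by rw [Module.finrank_tensorProduct, Module.finrank_linearMap, hE₁, hE₂])).mp hinjΨ
end

section
/- A 2-dimensional subspace U ⊆ E₁ ⊗ E₂ satisfies B(u, u') = 0 for all u, u' ∈ U if and only if either there is a 1-dimensional subspace Λ₁ ⊆ E₁ with U = span{e ⊗ f : e ∈ Λ₁, f ∈ E₂}, or there is a 1-dimensional subspace Λ₂ ⊆ E₂ with U = span{e ⊗ f : e ∈ E₁, f ∈ Λ₂}. -/
open TensorProduct Module

section Aux

variable {K : Type*} [Field K] {E : Type*} [AddCommGroup E] [Module K E]

/-- Alternating implies skew-symmetric. -/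
lemma aux_skew (ω : E →ₗ[K] E →ₗ[K] K) (halt : ∀ x, ω x x = 0) (x y : E) :
    ω y x = - ω x y := by
  have h := halt (x + y)
  simp only [map_add, LinearMap.add_apply, halt] at h
  have h2 : ω x y + ω y x = 0 := by linear_combination h
  linear_combination h2

/-- A nonzero alternating form is nonzero on a basis pair. -/
lemma aux_basis_ne (ω : E →ₗ[K] E →ₗ[K] K) (halt : ∀ x, ω x x = 0)
    (hne : ω ≠ 0) (b : Basis (Fin 2) K E) : ω (b 0) (b 1) ≠ 0 := by
  intro h0
  apply hne
  apply LinearMap.ext; intro x; apply LinearMap.ext; intro y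
  have hx := b.sum_repr x
  have hy := b.sum_repr y
  rw [← hx, ← hy]
  have h10 : ω (b 1) (b 0) = 0 := by rw [aux_skew ω halt, h0, neg_zero]
  simp only [Fin.sum_univ_two, map_add, map_smul, LinearMap.add_apply, LinearMap.smul_apply,
    LinearMap.zero_apply, halt, h0, h10, smul_zero, add_zero, zero_add]

/-- Nondegeneracy in dimension 2: orthogonal of a nonzero vector is its span. -/
lemma aux_mem_span (ω : E →ₗ[K] E →ₗ[K] K) (halt : ∀ x, ω x x = 0)
    (hne : ω ≠ 0) [FiniteDimensional K E] (hE : finrank K E = 2)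
    {x y : E} (hx : x ≠ 0) (h : ω x y = 0) : y ∈ Submodule.span K {x} := by
  by_contra hy
  have hli : LinearIndependent K ![y, x] := by
    rw [linearIndependent_fin2]
    refine ⟨by simpa using hx, fun a ha => ?_⟩
    simp only [Matrix.cons_val_one, Matrix.head_cons, Matrix.cons_val_zero] at ha
    apply hy
    rw [← ha]
    exact Submodule.smul_mem _ _ (Submodule.mem_span_singleton_self x)
  have hcard : Fintype.card (Fin 2) = finrank K E := by simp [hE]
  let b := basisOfLinearIndependentOfCardEqFinrank hli hcard
  have hb : ⇑b = ![y, x] := coe_basisOfLinearIndependentOfCardEqFinrank hli hcard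
  have := aux_basis_ne ω halt hne b
  apply this
  rw [hb]
  show ω (![y, x] 0) (![y, x] 1) = 0
  simp only [Matrix.cons_val_zero, Matrix.cons_val_one, Matrix.head_cons]
  rw [aux_skew ω halt, h, neg_zero]

end Aux

section Aux2

variable {K : Type*} [Field K] {E₁ E₂ : Type*} [AddCommGroup E₁] [Module K E₁]
  [AddCommGroup E₂] [Module K E₂] [FiniteDimensional K E₁] [FiniteDimensional K E₂]

lemma aux_simple (hK2 : (2 : K) ≠ 0)
    (hE₁ : finrank K E₁ = 2) (hE₂ : finrank K E₂ = 2)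
    (ω₁ : E₁ →ₗ[K] E₁ →ₗ[K] K) (ω₂ : E₂ →ₗ[K] E₂ →ₗ[K] K)
    (hω₁alt : ∀ x, ω₁ x x = 0) (hω₂alt : ∀ y, ω₂ y y = 0)
    (hω₁ne : ω₁ ≠ 0) (hω₂ne : ω₂ ≠ 0)
    (B : E₁ ⊗[K] E₂ →ₗ[K] E₁ ⊗[K] E₂ →ₗ[K] K)
    (hB : ∀ (e₁ f₁ : E₁) (e₂ f₂ : E₂),
      B (e₁ ⊗ₜ[K] e₂) (f₁ ⊗ₜ[K] f₂) = ω₁ e₁ f₁ * ω₂ e₂ f₂)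
    (u : E₁ ⊗[K] E₂) (hu : B u u = 0) : ∃ x y, u = x ⊗ₜ[K] y := by
  let b := finBasisOfFinrankEq K E₁ hE₁
  let c := finBasisOfFinrankEq K E₂ hE₂
  have h := (b.tensorProduct c).sum_repr u
  rw [Fintype.sum_prod_type] at h
  simp only [Fin.sum_univ_two, Basis.tensorProduct_apply] at h
  set a00 := (b.tensorProduct c).repr u (0,0) with ha00
  set a01 := (b.tensorProduct c).repr u (0,1) with ha01
  set a10 := (b.tensorProduct c).repr u (1,0) with ha10
  set a11 := (b.tensorProduct c).repr u (1,1) with ha11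
  have hBuu := hu
  rw [← h] at hBuu
  simp only [map_add, map_smul, LinearMap.add_apply, LinearMap.smul_apply, hB,
    smul_eq_mul, hω₁alt, hω₂alt, aux_skew ω₁ hω₁alt (b 0) (b 1),
    aux_skew ω₂ hω₂alt (c 0) (c 1), zero_mul, mul_zero, add_zero, zero_add] at hBuu
  have hp := aux_basis_ne ω₁ hω₁alt hω₁ne b
  have hq := aux_basis_ne ω₂ hω₂alt hω₂ne c
  have key : 2 * (a00 * a11 - a01 * a10) * (ω₁ (b 0) (b 1) * ω₂ (c 0) (c 1)) = 0 := by
    linear_combination hBuu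
  have hdet : a00 * a11 - a01 * a10 = 0 := by
    rcases mul_eq_zero.1 key with h' | h'
    · rcases mul_eq_zero.1 h' with h'' | h''
      · exact absurd h'' hK2
      · exact h''
    · exact absurd h' (mul_ne_zero hp hq)
  by_cases h00 : a00 = 0
  · by_cases h01 : a01 = 0
    · refine ⟨b 1, a10 • c 0 + a11 • c 1, ?_⟩
      rw [← h, h00, h01]
      simp [tmul_add, tmul_smul]
    · have h10 : a10 = 0 := by
        have hz : a01 * a10 = 0 := by linear_combination -hdet + a11 * h00
        exact (mul_eq_zero.1 hz).resolve_left h01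
      refine ⟨a01 • b 0 + a11 • b 1, c 1, ?_⟩
      rw [← h, h00, h10]
      simp [add_tmul, smul_tmul']
  · refine ⟨b 0 + (a10 * a00⁻¹) • b 1, a00 • c 0 + a01 • c 1, ?_⟩
    rw [← h]
    simp only [tmul_add, add_tmul, ← smul_tmul', tmul_smul, smul_smul]
    match_scalars
    · ring
    · ring
    · field_simp
    · field_simp
      linear_combination hdet

lemma aux_span_left (hE₁ : finrank K E₁ = 2) (hE₂ : finrank K E₂ = 2)
    {x : E₁} (hx : x ≠ 0) :
    finrank K (Submodule.span K
      {z : E₁ ⊗[K] E₂ | ∃ e ∈ Submodule.span K {x}, ∃ f : E₂, z = e ⊗ₜ[K] f}) = 2 := by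
  let c := finBasisOfFinrankEq K E₂ hE₂
  have hnetop : Submodule.span K {x} ≠ (⊤ : Submodule K E₁) := by
    intro htop
    have h1 : finrank K (Submodule.span K {x}) = 1 := finrank_span_singleton hx
    rw [htop, finrank_top, hE₁] at h1
    norm_num at h1
  obtain ⟨y, hy⟩ : ∃ y, y ∉ Submodule.span K {x} := by
    by_contra hall
    push_neg at hall
    exact hnetop (Submodule.eq_top_iff'.2 hall)
  have hli : LinearIndependent K ![x, y] := by
    rw [linearIndependent_fin2]
    constructor
    · simp only [Matrix.cons_val_one, Matrix.head_cons, Matrix.cons_val_fin_one]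
      intro h0; apply hy; rw [h0]; exact Submodule.zero_mem _
    · intro a ha
      simp only [Matrix.cons_val_one, Matrix.head_cons, Matrix.cons_val_zero,
        Matrix.cons_val_fin_one] at ha
      exfalso; apply hy
      have hane : a ≠ 0 := by rintro rfl; rw [zero_smul] at ha; exact hx ha.symm
      have hyx : y = a⁻¹ • x := by rw [← ha, smul_smul, inv_mul_cancel₀ hane, one_smul]
      rw [hyx]; exact Submodule.smul_mem _ _ (Submodule.mem_span_singleton_self x)
  have hcard : Fintype.card (Fin 2) = finrank K E₁ := by simp [hE₁]
  let b := basisOfLinearIndependentOfCardEqFinrank hli hcard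
  have hb0 : b 0 = x := by
    rw [show ⇑b = ![x, y] from coe_basisOfLinearIndependentOfCardEqFinrank hli hcard]; rfl
  set v : Fin 2 → E₁ ⊗[K] E₂ := fun j => x ⊗ₜ[K] c j with hv
  have hvli : LinearIndependent K v := by
    have hveq : v = (b.tensorProduct c) ∘ (fun j : Fin 2 => ((0 : Fin 2), j)) := by
      funext j; simp [hv, Module.Basis.tensorProduct_apply, hb0]
    rw [hveq]
    exact (b.tensorProduct c).linearIndependent.comp _ (fun j j' hjj => by
      simpa using congrArg Prod.snd hjj)
  have hspan_eq : Submodule.span K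
      {z : E₁ ⊗[K] E₂ | ∃ e ∈ Submodule.span K {x}, ∃ f : E₂, z = e ⊗ₜ[K] f}
      = Submodule.span K (Set.range v) := by
    apply le_antisymm
    · rw [Submodule.span_le]
      rintro z ⟨e, he, f, rfl⟩
      obtain ⟨a, rfl⟩ := Submodule.mem_span_singleton.1 he
      show (a • x) ⊗ₜ[K] f ∈ Submodule.span K (Set.range v)
      rw [← smul_tmul']
      refine Submodule.smul_mem _ _ ?_
      have hfr := (c.sum_repr f).symm
      rw [Fin.sum_univ_two] at hfr
      rw [hfr, tmul_add, tmul_smul, tmul_smul]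
      exact Submodule.add_mem _
        (Submodule.smul_mem _ _ (Submodule.subset_span ⟨0, rfl⟩))
        (Submodule.smul_mem _ _ (Submodule.subset_span ⟨1, rfl⟩))
    · rw [Submodule.span_le]
      rintro z ⟨j, rfl⟩
      exact Submodule.subset_span ⟨x, Submodule.mem_span_singleton_self x, c j, rfl⟩
  rw [hspan_eq, finrank_span_eq_card hvli]
  simp

lemma aux_span_right (hE₁ : finrank K E₁ = 2) (hE₂ : finrank K E₂ = 2)
    {y : E₂} (hy0 : y ≠ 0) :
    finrank K (Submodule.span K
      {z : E₁ ⊗[K] E₂ | ∃ e : E₁, ∃ f ∈ Submodule.span K {y}, z = e ⊗ₜ[K] f}) = 2 := by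
  let d := finBasisOfFinrankEq K E₁ hE₁
  have hnetop : Submodule.span K {y} ≠ (⊤ : Submodule K E₂) := by
    intro htop
    have h1 : finrank K (Submodule.span K {y}) = 1 := finrank_span_singleton hy0
    rw [htop, finrank_top, hE₂] at h1
    norm_num at h1
  obtain ⟨w, hw⟩ : ∃ w, w ∉ Submodule.span K {y} := by
    by_contra hall
    push_neg at hall
    exact hnetop (Submodule.eq_top_iff'.2 hall)
  have hli : LinearIndependent K ![y, w] := by
    rw [linearIndependent_fin2]
    constructor
    · simp only [Matrix.cons_val_one, Matrix.head_cons, Matrix.cons_val_fin_one]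
      intro h0; apply hw; rw [h0]; exact Submodule.zero_mem _
    · intro a ha
      simp only [Matrix.cons_val_one, Matrix.head_cons, Matrix.cons_val_zero,
        Matrix.cons_val_fin_one] at ha
      exfalso; apply hw
      have hane : a ≠ 0 := by rintro rfl; rw [zero_smul] at ha; exact hy0 ha.symm
      have hyw : w = a⁻¹ • y := by rw [← ha, smul_smul, inv_mul_cancel₀ hane, one_smul]
      rw [hyw]; exact Submodule.smul_mem _ _ (Submodule.mem_span_singleton_self y)
  have hcard : Fintype.card (Fin 2) = finrank K E₂ := by simp [hE₂]
  let b := basisOfLinearIndependentOfCardEqFinrank hli hcard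
  have hb0 : b 0 = y := by
    rw [show ⇑b = ![y, w] from coe_basisOfLinearIndependentOfCardEqFinrank hli hcard]; rfl
  set v : Fin 2 → E₁ ⊗[K] E₂ := fun j => d j ⊗ₜ[K] y with hv
  have hvli : LinearIndependent K v := by
    have hveq : v = (d.tensorProduct b) ∘ (fun j : Fin 2 => (j, (0 : Fin 2))) := by
      funext j; simp [hv, Module.Basis.tensorProduct_apply, hb0]
    rw [hveq]
    exact (d.tensorProduct b).linearIndependent.comp _ (fun j j' hjj => by
      simpa using congrArg Prod.fst hjj)
  have hspan_eq : Submodule.span K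
      {z : E₁ ⊗[K] E₂ | ∃ e : E₁, ∃ f ∈ Submodule.span K {y}, z = e ⊗ₜ[K] f}
      = Submodule.span K (Set.range v) := by
    apply le_antisymm
    · rw [Submodule.span_le]
      rintro z ⟨e, f, hf, rfl⟩
      obtain ⟨a, rfl⟩ := Submodule.mem_span_singleton.1 hf
      show e ⊗ₜ[K] (a • y) ∈ Submodule.span K (Set.range v)
      rw [tmul_smul]
      refine Submodule.smul_mem _ _ ?_
      have her := (d.sum_repr e).symm
      rw [Fin.sum_univ_two] at her
      rw [her, add_tmul, ← smul_tmul', ← smul_tmul']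
      exact Submodule.add_mem _
        (Submodule.smul_mem _ _ (Submodule.subset_span ⟨0, rfl⟩))
        (Submodule.smul_mem _ _ (Submodule.subset_span ⟨1, rfl⟩))
    · rw [Submodule.span_le]
      rintro z ⟨j, rfl⟩
      exact Submodule.subset_span ⟨d j, y, Submodule.mem_span_singleton_self y, rfl⟩
  rw [hspan_eq, finrank_span_eq_card hvli]
  simp

end Aux2

/-- A two-dimensional subspace `U ⊆ E₁ ⊗ E₂` is totally isotropic for `B` iff it is of the form
`Λ₁ ⊗ E₂` for a line `Λ₁ ⊆ E₁` or `E₁ ⊗ Λ₂` for a line `Λ₂ ⊆ E₂`. -/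
theorem stmt_3 (K : Type*) [Field K] (hK2 : (2 : K) ≠ 0)
    (E₁ E₂ : Type*) [AddCommGroup E₁] [Module K E₁] [AddCommGroup E₂] [Module K E₂]
    [FiniteDimensional K E₁] [FiniteDimensional K E₂]
    (hE₁ : Module.finrank K E₁ = 2) (hE₂ : Module.finrank K E₂ = 2)
    (ω₁ : E₁ →ₗ[K] E₁ →ₗ[K] K) (ω₂ : E₂ →ₗ[K] E₂ →ₗ[K] K)
    (hω₁alt : ∀ x, ω₁ x x = 0) (hω₂alt : ∀ y, ω₂ y y = 0)
    (hω₁ne : ω₁ ≠ 0) (hω₂ne : ω₂ ≠ 0)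
    (B : E₁ ⊗[K] E₂ →ₗ[K] E₁ ⊗[K] E₂ →ₗ[K] K)
    (hB : ∀ (e₁ f₁ : E₁) (e₂ f₂ : E₂),
      B (e₁ ⊗ₜ[K] e₂) (f₁ ⊗ₜ[K] f₂) = ω₁ e₁ f₁ * ω₂ e₂ f₂)
    (U : Submodule K (E₁ ⊗[K] E₂)) (hU : Module.finrank K U = 2) :
    (∀ u ∈ U, ∀ u' ∈ U, B u u' = 0) ↔
      ((∃ Λ₁ : Submodule K E₁, Module.finrank K Λ₁ = 1 ∧
          U = Submodule.span K {x : E₁ ⊗[K] E₂ | ∃ e ∈ Λ₁, ∃ f : E₂, x = e ⊗ₜ[K] f}) ∨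
       (∃ Λ₂ : Submodule K E₂, Module.finrank K Λ₂ = 1 ∧
          U = Submodule.span K {x : E₁ ⊗[K] E₂ | ∃ e : E₁, ∃ f ∈ Λ₂, x = e ⊗ₜ[K] f})) := by
  constructor
  · intro H
    let bU := finBasisOfFinrankEq K U hU
    set v : Fin 2 → E₁ ⊗[K] E₂ := fun i => (bU i : E₁ ⊗[K] E₂) with hv
    have hvmem : ∀ i, v i ∈ U := fun i => (bU i).2
    have hvli : LinearIndependent K v :=
      bU.linearIndependent.map' U.subtype (Submodule.ker_subtype U)
    have hUspan : Submodule.span K (Set.range v) = U := by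
      apply Submodule.eq_of_le_of_finrank_le
      · rw [Submodule.span_le]; rintro z ⟨i, rfl⟩; exact hvmem i
      · rw [hU, finrank_span_eq_card hvli]; simp
    obtain ⟨x₁, y₁, hxy1⟩ := aux_simple hK2 hE₁ hE₂ ω₁ ω₂ hω₁alt hω₂alt hω₁ne hω₂ne B hB
      (v 0) (H _ (hvmem 0) _ (hvmem 0))
    obtain ⟨x₂, y₂, hxy2⟩ := aux_simple hK2 hE₁ hE₂ ω₁ ω₂ hω₁alt hω₂alt hω₁ne hω₂ne B hB
      (v 1) (H _ (hvmem 1) _ (hvmem 1))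
    have hv0 : v 0 ≠ 0 := hvli.ne_zero 0
    have hv1 : v 1 ≠ 0 := hvli.ne_zero 1
    have hx₁ : x₁ ≠ 0 := fun hz => hv0 (by rw [hxy1, hz, zero_tmul])
    have hy₁ : y₁ ≠ 0 := fun hz => hv0 (by rw [hxy1, hz, tmul_zero])
    have hx₂ : x₂ ≠ 0 := fun hz => hv1 (by rw [hxy2, hz, zero_tmul])
    have hy₂ : y₂ ≠ 0 := fun hz => hv1 (by rw [hxy2, hz, tmul_zero])
    have hB01 : ω₁ x₁ x₂ * ω₂ y₁ y₂ = 0 := by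
      have hh := H _ (hvmem 0) _ (hvmem 1)
      rwa [hxy1, hxy2, hB] at hh
    rcases mul_eq_zero.1 hB01 with hcase | hcase
    · left
      refine ⟨Submodule.span K {x₁}, finrank_span_singleton hx₁, ?_⟩
      have hmem2 : x₂ ∈ Submodule.span K {x₁} :=
        aux_mem_span ω₁ hω₁alt hω₁ne hE₁ hx₁ hcase
      have hle : U ≤ Submodule.span K
          {z : E₁ ⊗[K] E₂ | ∃ e ∈ Submodule.span K {x₁}, ∃ f : E₂, z = e ⊗ₜ[K] f} := by
        rw [← hUspan, Submodule.span_le]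
        rintro z ⟨i, rfl⟩
        fin_cases i
        · exact Submodule.subset_span ⟨x₁, Submodule.mem_span_singleton_self x₁, y₁, hxy1⟩
        · exact Submodule.subset_span ⟨x₂, hmem2, y₂, hxy2⟩
      exact Submodule.eq_of_le_of_finrank_le hle
        (le_of_eq (by rw [aux_span_left hE₁ hE₂ hx₁, hU]))
    · right
      refine ⟨Submodule.span K {y₁}, finrank_span_singleton hy₁, ?_⟩
      have hmem2 : y₂ ∈ Submodule.span K {y₁} :=
        aux_mem_span ω₂ hω₂alt hω₂ne hE₂ hy₁ hcase
      have hle : U ≤ Submodule.span K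
          {z : E₁ ⊗[K] E₂ | ∃ e : E₁, ∃ f ∈ Submodule.span K {y₁}, z = e ⊗ₜ[K] f} := by
        rw [← hUspan, Submodule.span_le]
        rintro z ⟨i, rfl⟩
        fin_cases i
        · exact Submodule.subset_span ⟨x₁, y₁, Submodule.mem_span_singleton_self y₁, hxy1⟩
        · exact Submodule.subset_span ⟨x₂, y₂, hmem2, hxy2⟩
      exact Submodule.eq_of_le_of_finrank_le hle
        (le_of_eq (by rw [aux_span_right hE₁ hE₂ hy₁, hU]))
  · rintro (⟨Λ₁, hΛ₁, rfl⟩ | ⟨Λ₂, hΛ₂, rfl⟩)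
    · intro u hu u' hu'
      obtain ⟨g, hg0, hgall⟩ := finrank_eq_one_iff'.mp hΛ₁
      induction hu, hu' using Submodule.span_induction₂ with
      | mem_mem z z' hz hz' =>
          obtain ⟨e, he, f, rfl⟩ := hz
          obtain ⟨e', he', f', rfl⟩ := hz'
          rw [hB]
          obtain ⟨a, ha⟩ := hgall ⟨e, he⟩
          obtain ⟨a', ha'⟩ := hgall ⟨e', he'⟩
          have hea : e = a • (g : E₁) := (congrArg Subtype.val ha).symm
          have hea' : e' = a' • (g : E₁) := (congrArg Subtype.val ha').symm
          have hz : ω₁ e e' = 0 := by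
            rw [hea, hea']; simp [map_smul, hω₁alt]
          rw [hz, zero_mul]
      | zero_left y hy => simp
      | zero_right x hx => simp
      | add_left x y z hx hy hz h1 h2 => simp [map_add, h1, h2]
      | add_right x y z hx hy hz h1 h2 => simp [map_add, h1, h2]
      | smul_left r x y hx hy h1 => simp [map_smul, h1]
      | smul_right r x y hx hy h1 => simp [map_smul, h1]
    · intro u hu u' hu'
      obtain ⟨g, hg0, hgall⟩ := finrank_eq_one_iff'.mp hΛ₂
      induction hu, hu' using Submodule.span_induction₂ with
      | mem_mem z z' hz hz' =>
          obtain ⟨e, f, hf, rfl⟩ := hz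
          obtain ⟨e', f', hf', rfl⟩ := hz'
          rw [hB]
          obtain ⟨a, ha⟩ := hgall ⟨f, hf⟩
          obtain ⟨a', ha'⟩ := hgall ⟨f', hf'⟩
          have hfa : f = a • (g : E₂) := (congrArg Subtype.val ha).symm
          have hfa' : f' = a' • (g : E₂) := (congrArg Subtype.val ha').symm
          have hz : ω₂ f f' = 0 := by
            rw [hfa, hfa']; simp [map_smul, hω₂alt]
          rw [hz, mul_zero]
      | zero_left y hy => simp
      | zero_right x hx => simp
      | add_left x y z hx hy hz h1 h2 => simp [map_add, h1, h2]
      | add_right x y z hx hy hz h1 h2 => simp [map_add, h1, h2]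
      | smul_left r x y hx hy h1 => simp [map_smul, h1]
      | smul_right r x y hx hy h1 => simp [map_smul, h1]
end

section
/- Assume in addition that K is algebraically closed. For every symmetric tensor x ∈ E ⊗ E (i.e., τ(x) = x), one has B(x, x) = 0 if and only if x = e ⊗ e for some e ∈ E. -/
open TensorProduct

/-- Over an algebraically closed field of characteristic `≠ 2`: for the form `B` on `E ⊗ E`
induced by a nonzero alternating form `ω` on a two-dimensional space `E`, a symmetric tensor `x`
(i.e. `τ x = x` for the flip `τ`) satisfies `B(x,x) = 0` iff `x = e ⊗ e` for some `e ∈ E`. -/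
theorem stmt_4 (K : Type*) [Field K] [IsAlgClosed K] (hK2 : (2 : K) ≠ 0)
    (E : Type*) [AddCommGroup E] [Module K E] [FiniteDimensional K E]
    (hE : Module.finrank K E = 2)
    (ω : E →ₗ[K] E →ₗ[K] K) (hωalt : ∀ x, ω x x = 0) (hωne : ω ≠ 0)
    (B : E ⊗[K] E →ₗ[K] E ⊗[K] E →ₗ[K] K)
    (hB : ∀ (e₁ f₁ e₂ f₂ : E),
      B (e₁ ⊗ₜ[K] e₂) (f₁ ⊗ₜ[K] f₂) = ω e₁ f₁ * ω e₂ f₂)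
    (τ : E ⊗[K] E →ₗ[K] E ⊗[K] E)
    (hτ : ∀ x y : E, τ (x ⊗ₜ[K] y) = y ⊗ₜ[K] x) :
    ∀ x : E ⊗[K] E, τ x = x → (B x x = 0 ↔ ∃ e : E, x = e ⊗ₜ[K] e) := by
  -- skew-symmetry
  have hskew : ∀ p q : E, ω q p = - ω p q := by
    intro p q
    have h := hωalt (p + q)
    simp only [map_add, LinearMap.add_apply, hωalt] at h
    linear_combination h
  -- find u, v with ω u v = 1
  obtain ⟨p, q, hpq⟩ : ∃ p q : E, ω p q ≠ 0 := by
    by_contra h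
    push_neg at h
    exact hωne (by ext p q; simp [h])
  obtain ⟨u, v, huv⟩ : ∃ u v : E, ω u v = 1 :=
    ⟨p, (ω p q)⁻¹ • q, by rw [map_smul, smul_eq_mul]; exact inv_mul_cancel₀ hpq⟩
  have hvu : ω v u = -1 := by rw [hskew, huv]
  have huu : ω u u = 0 := hωalt u
  have hvv : ω v v = 0 := hωalt v
  -- basis
  have hli : LinearIndependent K ![u, v] := by
    rw [LinearIndependent.pair_iff]
    intro s t hst
    have h1 : ω (s • u + t • v) v = 0 := by rw [hst]; simp
    have h2 : ω u (s • u + t • v) = 0 := by rw [hst]; simp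
    simp only [map_add, map_smul, LinearMap.add_apply, LinearMap.smul_apply, smul_eq_mul,
      huu, huv, hvu, hvv] at h1 h2
    exact ⟨by linear_combination h1, by linear_combination h2⟩
  have hcard : Fintype.card (Fin 2) = Module.finrank K E := by simp [hE]
  have hspan : ∀ w : E, ∃ s t : K, w = s • u + t • v := by
    intro w
    let hb := basisOfLinearIndependentOfCardEqFinrank hli hcard
    have hco : ⇑hb = ![u, v] := coe_basisOfLinearIndependentOfCardEqFinrank hli hcard
    refine ⟨hb.repr w 0, hb.repr w 1, ?_⟩
    have h := hb.sum_repr w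
    rw [Fin.sum_univ_two, hco] at h
    simp only [Matrix.cons_val_zero, Matrix.cons_val_one, Matrix.head_cons] at h
    exact h.symm
  -- decomposition of arbitrary tensor
  have hdec : ∀ x : E ⊗[K] E, ∃ a b c d : K,
      x = a • u ⊗ₜ[K] u + b • u ⊗ₜ[K] v + c • v ⊗ₜ[K] u + d • v ⊗ₜ[K] v := by
    intro x
    induction x with
    | zero => exact ⟨0, 0, 0, 0, by simp⟩
    | tmul w z =>
      obtain ⟨s, t, rfl⟩ := hspan w
      obtain ⟨s', t', rfl⟩ := hspan z
      refine ⟨s * s', s * t', t * s', t * t', ?_⟩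
      simp only [add_tmul, tmul_add, ← smul_tmul', tmul_smul, smul_smul]
      module
    | add y z hy hz =>
      obtain ⟨a, b, c, d, rfl⟩ := hy
      obtain ⟨a', b', c', d', rfl⟩ := hz
      exact ⟨a + a', b + b', c + c', d + d', by module⟩
  have hee : ∀ s t : K, (s • u + t • v) ⊗ₜ[K] (s • u + t • v)
      = (s * s) • u ⊗ₜ[K] u + (s * t) • u ⊗ₜ[K] v + (s * t) • v ⊗ₜ[K] u
        + (t * t) • v ⊗ₜ[K] v := by
    intro s t
    simp only [add_tmul, tmul_add, ← smul_tmul', tmul_smul, smul_smul]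
    module
  intro x hsym
  obtain ⟨a, b, c, d, hx⟩ := hdec x
  -- symmetry forces b = c
  have hbc : b = c := by
    have h1 : B (u ⊗ₜ[K] v) x = -c := by
      rw [hx]
      simp [map_add, map_smul, hB, huu, huv, hvu, hvv]
    have h2 : B (u ⊗ₜ[K] v) (τ x) = -b := by
      rw [hx]
      simp [map_add, map_smul, hτ, hB, huu, huv, hvu, hvv]
    rw [hsym, h1] at h2
    exact (neg_injective h2).symm
  subst hbc
  have hBxx : B x x = 2 * (a * d - b * b) := by
    rw [hx]
    simp only [map_add, map_smul, LinearMap.add_apply, LinearMap.smul_apply, hB,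
      huu, huv, hvu, hvv, smul_eq_mul]
    ring
  have key : ∀ s t : K, s * s = a → s * t = b → t * t = d → ∃ e : E, x = e ⊗ₜ[K] e := by
    intro s t h1 h2 h3
    exact ⟨s • u + t • v, by rw [hx, hee, h1, h2, h3]⟩
  constructor
  · intro h0
    rw [hBxx] at h0
    have had : a * d = b * b := by
      rcases mul_eq_zero.1 h0 with h | h
      · exact absurd h hK2
      · linear_combination h
    by_cases ha : a = 0
    · have hb0 : b = 0 := by
        have hbb : b * b = 0 := by rw [← had, ha, zero_mul]
        exact mul_self_eq_zero.1 hbb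
      obtain ⟨t, ht⟩ := IsAlgClosed.exists_pow_nat_eq (k := K) d (n := 2) (by norm_num)
      exact key 0 t (by rw [ha]; ring) (by rw [hb0]; ring) (by rw [← ht]; ring)
    · obtain ⟨s, hs⟩ := IsAlgClosed.exists_pow_nat_eq (k := K) a (n := 2) (by norm_num)
      have hs0 : s ≠ 0 := fun h => ha (by rw [← hs, h]; ring)
      refine key s (b / s) (by rw [← hs]; ring) (by field_simp) ?_
      field_simp
      rw [hs, had]; ring
  · rintro ⟨e, rfl⟩
    rw [hB, hωalt, zero_mul]
end

section
/- For every ω ∈ ⋀²W: one has ω ∈ S and B(ω, ω) = 0 if and only if ω = v ∧ w for some v, w ∈ W with α(v, w) = 0. (Fiberwise, the isotropic locus of the rank-five orthogonal space S is the Lagrangian Grassmannian of α.) -/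
namespace Stmt9Aux
open ExteriorAlgebra

variable {K W : Type*} [Field K] [AddCommGroup W] [Module K W] (b : Module.Basis (Fin 4) K W)

lemma sqz (v : W) (x : ExteriorAlgebra K W) : ι K v * (ι K v * x) = 0 := by
  rw [← mul_assoc, ι_sq_zero, zero_mul]

lemma swapg (v w : W) : ι K w * ι K v = -(ι K v * ι K w) := by
  rw [eq_neg_iff_add_eq_zero, add_comm]; exact ι_add_mul_swap v w

lemma swapg' (v w : W) (x : ExteriorAlgebra K W) :
    ι K w * (ι K v * x) = -(ι K v * (ι K w * x)) := by
  rw [← mul_assoc, swapg, neg_mul, mul_assoc]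

noncomputable def E2 : Fin 6 → ExteriorAlgebra K W
  | 0 => ι K (b 0) * ι K (b 1)
  | 1 => ι K (b 0) * ι K (b 2)
  | 2 => ι K (b 0) * ι K (b 3)
  | 3 => ι K (b 1) * ι K (b 2)
  | 4 => ι K (b 1) * ι K (b 3)
  | 5 => ι K (b 2) * ι K (b 3)

lemma E2_0 : E2 b 0 = ι K (b 0) * ι K (b 1) := rfl
lemma E2_1 : E2 b 1 = ι K (b 0) * ι K (b 2) := rfl
lemma E2_2 : E2 b 2 = ι K (b 0) * ι K (b 3) := rfl
lemma E2_3 : E2 b 3 = ι K (b 1) * ι K (b 2) := rfl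
lemma E2_4 : E2 b 4 = ι K (b 1) * ι K (b 3) := rfl
lemma E2_5 : E2 b 5 = ι K (b 2) * ι K (b 3) := rfl

noncomputable def EE : ExteriorAlgebra K W :=
  ι K (b 0) * (ι K (b 1) * (ι K (b 2) * ι K (b 3)))

set_option maxHeartbeats 1000000 in
lemma mulE2 (c d : Fin 6 → K) :
    (∑ i, c i • E2 b i) * (∑ i, d i • E2 b i) =
      (c 0 * d 5 - c 1 * d 4 + c 2 * d 3 + c 3 * d 2 - c 4 * d 1 + c 5 * d 0) • EE b := by
  have h10' := swapg' (K := K) (b 0) (b 1)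
  have h20' := swapg' (K := K) (b 0) (b 2)
  have h30' := swapg' (K := K) (b 0) (b 3)
  have h21' := swapg' (K := K) (b 1) (b 2)
  have h31' := swapg' (K := K) (b 1) (b 3)
  have h32' := swapg' (K := K) (b 2) (b 3)
  have h10 := swapg (K := K) (b 0) (b 1)
  have h20 := swapg (K := K) (b 0) (b 2)
  have h30 := swapg (K := K) (b 0) (b 3)
  have h21 := swapg (K := K) (b 1) (b 2)
  have h31 := swapg (K := K) (b 1) (b 3)
  have h32 := swapg (K := K) (b 2) (b 3)
  simp only [Fin.sum_univ_six, E2_0, E2_1, E2_2, E2_3, E2_4, E2_5, EE]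
  simp only [mul_add, add_mul, smul_mul_assoc, mul_smul_comm, smul_smul, mul_assoc,
    h10, h20, h30, h21, h31, h32, h10', h20', h30', h21', h31', h32',
    sqz, ι_sq_zero, mul_zero, zero_mul, smul_zero, mul_neg, neg_mul, smul_neg, neg_neg,
    add_zero, zero_add]
  module

set_option maxHeartbeats 1000000 in
lemma mem2 (i j : Fin 4) :
    ι K (b i) * ι K (b j) ∈ Submodule.span K (Set.range (E2 b)) := by
  fin_cases i <;> fin_cases j <;>
    first
      | (simp [ι_sq_zero]; done)
      | exact Submodule.subset_span ⟨0, rfl⟩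
      | exact Submodule.subset_span ⟨1, rfl⟩
      | exact Submodule.subset_span ⟨2, rfl⟩
      | exact Submodule.subset_span ⟨3, rfl⟩
      | exact Submodule.subset_span ⟨4, rfl⟩
      | exact Submodule.subset_span ⟨5, rfl⟩
      | (rw [swapg]
         first
           | exact Submodule.neg_mem _ (Submodule.subset_span ⟨0, rfl⟩)
           | exact Submodule.neg_mem _ (Submodule.subset_span ⟨1, rfl⟩)
           | exact Submodule.neg_mem _ (Submodule.subset_span ⟨2, rfl⟩)
           | exact Submodule.neg_mem _ (Submodule.subset_span ⟨3, rfl⟩)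
           | exact Submodule.neg_mem _ (Submodule.subset_span ⟨4, rfl⟩)
           | exact Submodule.neg_mem _ (Submodule.subset_span ⟨5, rfl⟩))

lemma span2 (x : ⋀[K]^2 W) :
    ∃ c : Fin 6 → K, (x : ExteriorAlgebra K W) = ∑ i, c i • E2 b i := by
  have hle : (⋀[K]^2 W : Submodule K (ExteriorAlgebra K W)) ≤
      Submodule.span K (Set.range (E2 b)) := by
    rw [← ιMulti_span_fixedDegree, Submodule.span_le]
    rintro _ ⟨v, rfl⟩
    have hv : ιMulti K 2 v = ι K (v 0) * ι K (v 1) := by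
      rw [ιMulti_apply]; simp [List.ofFn_succ]
    rw [hv, ← Module.Basis.sum_repr b (v 0), ← Module.Basis.sum_repr b (v 1)]
    simp only [map_sum, map_smul, Finset.sum_mul]
    refine Submodule.sum_mem _ fun i _ => ?_
    simp only [smul_mul_assoc]
    refine Submodule.smul_mem _ _ ?_
    simp only [Finset.mul_sum, mul_smul_comm]
    exact Submodule.sum_mem _ fun j _ => Submodule.smul_mem _ _ (mem2 b i j)
  obtain ⟨c, hc⟩ := (Submodule.mem_span_range_iff_exists_fun K).1 (hle x.2)
  exact ⟨c, hc.symm⟩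

lemma EE_mem : EE b ∈ ⋀[K]^4 W := by
  have h : EE b = ιMulti K 4 ![b 0, b 1, b 2, b 3] := by
    rw [ιMulti_apply]; simp [List.ofFn_succ, mul_assoc, EE]
  rw [h]
  exact ιMulti_range K 4 (Set.mem_range_self _)

lemma span4 (z : ⋀[K]^4 W) : ∃ c : K, (z : ExteriorAlgebra K W) = c • EE b := by
  have h4 : (⋀[K]^4 W : Submodule K (ExteriorAlgebra K W)) =
      (⋀[K]^2 W : Submodule K (ExteriorAlgebra K W)) * ⋀[K]^2 W := by
    show LinearMap.range (ι K (M := W)) ^ 4 = _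
    rw [show (4 : ℕ) = 2 + 2 from rfl, pow_add]
  have hz : (z : ExteriorAlgebra K W) ∈
      (⋀[K]^2 W : Submodule K (ExteriorAlgebra K W)) * ⋀[K]^2 W := h4 ▸ z.2
  have hmem : (z : ExteriorAlgebra K W) ∈ Submodule.span K {EE b} := by
    refine Submodule.mul_induction_on hz (fun m hm n hn => ?_)
      (fun x y hx hy => Submodule.add_mem _ hx hy)
    obtain ⟨c, hc⟩ := span2 b ⟨m, hm⟩
    obtain ⟨d, hd⟩ := span2 b ⟨n, hn⟩
    simp only at hc hd
    rw [hc, hd, mulE2]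
    exact Submodule.smul_mem _ _ (Submodule.mem_span_singleton_self _)
  obtain ⟨c, hc⟩ := Submodule.mem_span_singleton.1 hmem
  exact ⟨c, hc.symm⟩

set_option maxHeartbeats 1000000 in
lemma decompose (c : Fin 6 → K) (hPl : c 0 * c 5 - c 1 * c 4 + c 2 * c 3 = 0) :
    ∃ v w : W, ∑ i, c i • E2 b i = ι K v * ι K w := by
  have h10 := swapg (K := K) (b 0) (b 1)
  have h20 := swapg (K := K) (b 0) (b 2)
  have h30 := swapg (K := K) (b 0) (b 3)
  have h21 := swapg (K := K) (b 1) (b 2)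
  have h31 := swapg (K := K) (b 1) (b 3)
  have h32 := swapg (K := K) (b 2) (b 3)
  by_cases hc0 : c 0 ≠ 0
  · refine ⟨c 0 • b 1 + c 1 • b 2 + c 2 • b 3, (c 0)⁻¹ • ((-(c 0)) • b 0 + c 3 • b 2 + c 4 • b 3), ?_⟩
    have key : ι K (c 0 • b 1 + c 1 • b 2 + c 2 • b 3) * ι K ((-(c 0)) • b 0 + c 3 • b 2 + c 4 • b 3) = (c 0) • ∑ i, c i • E2 b i := by
      simp only [Fin.sum_univ_six, E2_0, E2_1, E2_2, E2_3, E2_4, E2_5,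
        map_add, map_smul, map_neg, smul_add, smul_smul]
      simp only [mul_add, add_mul, smul_mul_assoc, mul_smul_comm, smul_smul,
        h10, h20, h30, h21, h31, h32, ι_sq_zero, mul_zero, zero_mul, smul_zero,
        mul_neg, neg_mul, smul_neg, neg_neg, add_zero, zero_add, neg_smul]
      match_scalars <;> first | ring1 | linear_combination hPl | linear_combination -hPl
    rw [map_smul, mul_smul_comm, key, smul_smul, inv_mul_cancel₀ hc0, one_smul]
  by_cases hc1 : c 1 ≠ 0
  · refine ⟨c 0 • b 1 + c 1 • b 2 + c 2 • b 3, (c 1)⁻¹ • ((-(c 1)) • b 0 + (-(c 3)) • b 1 + c 5 • b 3), ?_⟩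
    have key : ι K (c 0 • b 1 + c 1 • b 2 + c 2 • b 3) * ι K ((-(c 1)) • b 0 + (-(c 3)) • b 1 + c 5 • b 3) = (c 1) • ∑ i, c i • E2 b i := by
      simp only [Fin.sum_univ_six, E2_0, E2_1, E2_2, E2_3, E2_4, E2_5,
        map_add, map_smul, map_neg, smul_add, smul_smul]
      simp only [mul_add, add_mul, smul_mul_assoc, mul_smul_comm, smul_smul,
        h10, h20, h30, h21, h31, h32, ι_sq_zero, mul_zero, zero_mul, smul_zero,
        mul_neg, neg_mul, smul_neg, neg_neg, add_zero, zero_add, neg_smul]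
      match_scalars <;> first | ring1 | linear_combination hPl | linear_combination -hPl
    rw [map_smul, mul_smul_comm, key, smul_smul, inv_mul_cancel₀ hc1, one_smul]
  by_cases hc2 : c 2 ≠ 0
  · refine ⟨c 0 • b 1 + c 1 • b 2 + c 2 • b 3, (c 2)⁻¹ • ((-(c 2)) • b 0 + (-(c 4)) • b 1 + (-(c 5)) • b 2), ?_⟩
    have key : ι K (c 0 • b 1 + c 1 • b 2 + c 2 • b 3) * ι K ((-(c 2)) • b 0 + (-(c 4)) • b 1 + (-(c 5)) • b 2) = (c 2) • ∑ i, c i • E2 b i := by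
      simp only [Fin.sum_univ_six, E2_0, E2_1, E2_2, E2_3, E2_4, E2_5,
        map_add, map_smul, map_neg, smul_add, smul_smul]
      simp only [mul_add, add_mul, smul_mul_assoc, mul_smul_comm, smul_smul,
        h10, h20, h30, h21, h31, h32, ι_sq_zero, mul_zero, zero_mul, smul_zero,
        mul_neg, neg_mul, smul_neg, neg_neg, add_zero, zero_add, neg_smul]
      match_scalars <;> first | ring1 | linear_combination hPl | linear_combination -hPl
    rw [map_smul, mul_smul_comm, key, smul_smul, inv_mul_cancel₀ hc2, one_smul]
  by_cases hc3 : c 3 ≠ 0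
  · refine ⟨(-(c 0)) • b 0 + c 3 • b 2 + c 4 • b 3, (c 3)⁻¹ • ((-(c 1)) • b 0 + (-(c 3)) • b 1 + c 5 • b 3), ?_⟩
    have key : ι K ((-(c 0)) • b 0 + c 3 • b 2 + c 4 • b 3) * ι K ((-(c 1)) • b 0 + (-(c 3)) • b 1 + c 5 • b 3) = (c 3) • ∑ i, c i • E2 b i := by
      simp only [Fin.sum_univ_six, E2_0, E2_1, E2_2, E2_3, E2_4, E2_5,
        map_add, map_smul, map_neg, smul_add, smul_smul]
      simp only [mul_add, add_mul, smul_mul_assoc, mul_smul_comm, smul_smul,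
        h10, h20, h30, h21, h31, h32, ι_sq_zero, mul_zero, zero_mul, smul_zero,
        mul_neg, neg_mul, smul_neg, neg_neg, add_zero, zero_add, neg_smul]
      match_scalars <;> first | ring1 | linear_combination hPl | linear_combination -hPl
    rw [map_smul, mul_smul_comm, key, smul_smul, inv_mul_cancel₀ hc3, one_smul]
  by_cases hc4 : c 4 ≠ 0
  · refine ⟨(-(c 0)) • b 0 + c 3 • b 2 + c 4 • b 3, (c 4)⁻¹ • ((-(c 2)) • b 0 + (-(c 4)) • b 1 + (-(c 5)) • b 2), ?_⟩
    have key : ι K ((-(c 0)) • b 0 + c 3 • b 2 + c 4 • b 3) * ι K ((-(c 2)) • b 0 + (-(c 4)) • b 1 + (-(c 5)) • b 2) = (c 4) • ∑ i, c i • E2 b i := by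
      simp only [Fin.sum_univ_six, E2_0, E2_1, E2_2, E2_3, E2_4, E2_5,
        map_add, map_smul, map_neg, smul_add, smul_smul]
      simp only [mul_add, add_mul, smul_mul_assoc, mul_smul_comm, smul_smul,
        h10, h20, h30, h21, h31, h32, ι_sq_zero, mul_zero, zero_mul, smul_zero,
        mul_neg, neg_mul, smul_neg, neg_neg, add_zero, zero_add, neg_smul]
      match_scalars <;> first | ring1 | linear_combination hPl | linear_combination -hPl
    rw [map_smul, mul_smul_comm, key, smul_smul, inv_mul_cancel₀ hc4, one_smul]
  by_cases hc5 : c 5 ≠ 0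
  · refine ⟨(-(c 1)) • b 0 + (-(c 3)) • b 1 + c 5 • b 3, (c 5)⁻¹ • ((-(c 2)) • b 0 + (-(c 4)) • b 1 + (-(c 5)) • b 2), ?_⟩
    have key : ι K ((-(c 1)) • b 0 + (-(c 3)) • b 1 + c 5 • b 3) * ι K ((-(c 2)) • b 0 + (-(c 4)) • b 1 + (-(c 5)) • b 2) = (c 5) • ∑ i, c i • E2 b i := by
      simp only [Fin.sum_univ_six, E2_0, E2_1, E2_2, E2_3, E2_4, E2_5,
        map_add, map_smul, map_neg, smul_add, smul_smul]
      simp only [mul_add, add_mul, smul_mul_assoc, mul_smul_comm, smul_smul,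
        h10, h20, h30, h21, h31, h32, ι_sq_zero, mul_zero, zero_mul, smul_zero,
        mul_neg, neg_mul, smul_neg, neg_neg, add_zero, zero_add, neg_smul]
      match_scalars <;> first | ring1 | linear_combination hPl | linear_combination -hPl
    rw [map_smul, mul_smul_comm, key, smul_smul, inv_mul_cancel₀ hc5, one_smul]
  push_neg at hc0 hc1 hc2 hc3 hc4 hc5
  refine ⟨0, 0, ?_⟩
  simp [Fin.sum_univ_six, hc0, hc1, hc2, hc3, hc4, hc5]

end Stmt9Aux

open ExteriorAlgebra Stmt9Aux in
/-- For `ω ∈ ⋀²W`: `ω ∈ S = ker α̃` and `B(ω, ω) = 0` iff `ω = v ∧ w` for some `v, w ∈ W` with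
`α(v, w) = 0`. Fiberwise, the isotropic locus of the rank-five orthogonal space `S` is the
Lagrangian Grassmannian of `α`. -/
theorem stmt_9 (K : Type*) [Field K] (hK2 : (2 : K) ≠ 0)
    (W : Type*) [AddCommGroup W] [Module K W] [FiniteDimensional K W]
    (hW : Module.finrank K W = 4)
    (wedge : ⋀[K]^2 W →ₗ[K] ⋀[K]^2 W →ₗ[K] ⋀[K]^4 W)
    (hwedge : ∀ x y : ⋀[K]^2 W,
      (wedge x y : ExteriorAlgebra K W) = (x : ExteriorAlgebra K W) * (y : ExteriorAlgebra K W))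
    (θ : ⋀[K]^4 W →ₗ[K] K) (hθ : θ ≠ 0)
    (B : ⋀[K]^2 W →ₗ[K] ⋀[K]^2 W →ₗ[K] K)
    (hB : ∀ x y : ⋀[K]^2 W, B x y = θ (wedge x y))
    (α : W →ₗ[K] W →ₗ[K] K)
    (hαalt : ∀ v, α v v = 0) (hαnd : ∀ v, (∀ w, α v w = 0) → v = 0)
    (αt : ⋀[K]^2 W →ₗ[K] K)
    (hαt : ∀ (x : ⋀[K]^2 W) (v w : W),
      (x : ExteriorAlgebra K W) = ExteriorAlgebra.ι K v * ExteriorAlgebra.ι K w →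
      αt x = α v w) :
    ∀ ω : ⋀[K]^2 W,
      (ω ∈ LinearMap.ker αt ∧ B ω ω = 0) ↔
      ∃ v w : W,
        (ω : ExteriorAlgebra K W) = ExteriorAlgebra.ι K v * ExteriorAlgebra.ι K w ∧
        α v w = 0 := by
  have b : Module.Basis (Fin 4) K W := Module.finBasisOfFinrankEq K W hW
  have hEE : EE b ∈ ⋀[K]^4 W := EE_mem b
  intro ω
  constructor
  · rintro ⟨hk, hBo⟩
    obtain ⟨c, hc⟩ := span2 b ω
    have hθEE : θ ⟨EE b, hEE⟩ ≠ 0 := by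
      intro h0
      apply hθ
      refine LinearMap.ext fun z => ?_
      obtain ⟨d, hd⟩ := span4 b z
      have hz : z = d • (⟨EE b, hEE⟩ : ⋀[K]^4 W) := Subtype.ext hd
      rw [hz, map_smul, h0, smul_zero]
      rfl
    have hmul : (wedge ω ω : ExteriorAlgebra K W) =
        (2 * (c 0 * c 5 - c 1 * c 4 + c 2 * c 3)) • EE b := by
      rw [hwedge, hc, mulE2]
      module
    have hw4 : wedge ω ω = (2 * (c 0 * c 5 - c 1 * c 4 + c 2 * c 3)) •
        (⟨EE b, hEE⟩ : ⋀[K]^4 W) := Subtype.ext hmul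
    have hθ0 : θ (wedge ω ω) = 0 := by rw [← hB]; exact hBo
    rw [hw4, map_smul, smul_eq_mul] at hθ0
    have hPl2 := (mul_eq_zero.1 hθ0).resolve_right hθEE
    have hPl : c 0 * c 5 - c 1 * c 4 + c 2 * c 3 = 0 :=
      (mul_eq_zero.1 hPl2).resolve_left hK2
    obtain ⟨v, w, hvw⟩ := decompose b c hPl
    have hωvw : (ω : ExteriorAlgebra K W) = ι K v * ι K w := hc.trans hvw
    refine ⟨v, w, hωvw, ?_⟩
    rw [← hαt ω v w hωvw]
    exact hk
  · rintro ⟨v, w, hvw, hα⟩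
    constructor
    · rw [LinearMap.mem_ker, hαt ω v w hvw]; exact hα
    · have hz : (ι K v * ι K w) * (ι K v * ι K w) = 0 := by
        rw [mul_assoc (ι K v) (ι K w), swapg' (K := K) v w (ι K w), ι_sq_zero,
          mul_zero, neg_zero, mul_zero]
      have hw0 : wedge ω ω = 0 := Subtype.ext (by rw [hwedge, hvw, hz]; rfl)
      rw [hB, hw0, map_zero]
end

section
/- Let ι : E* ⊗ ⋀²E → E be the linear map determined by ι(f ⊗ (u ∧ v)) = f(u)·v − f(v)·u, and let Φ := id_E ⊗ ι : E ⊗ (E* ⊗ ⋀²E) → E ⊗ E. Then: (i) Φ is a linear isomorphism; (ii) for every ω ∈ ⋀²E, Φ(C ⊗ ω) = a(ω), where C ∈ E ⊗ E* is the canonical coevaluation element corresponding to the identity endomorphism Id_E and a : ⋀²E → E ⊗ E is the linear map determined by a(u ∧ v) = u ⊗ v − v ⊗ u; (iii) Φ maps (K·C) ⊗ ⋀²E onto the subspace of antisymmetric tensors of E ⊗ E, and maps End₀ ⊗ ⋀²E onto the subspace of symmetric tensors of E ⊗ E, where End₀ ⊆ E ⊗ E* is the subspace corresponding to traceless endomorphisms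 (the kernel of the evaluation map E ⊗ E* → K). -/
open TensorProduct

set_option maxHeartbeats 1000000 in
set_option synthInstance.maxHeartbeats 400000 in
/-- Let `E` be 2-dimensional, `ι : E* ⊗ ⋀²E → E` the map `f ⊗ (u ∧ v) ↦ f(u)·v − f(v)·u`, and
`Φ = id_E ⊗ ι : E ⊗ (E* ⊗ ⋀²E) → E ⊗ E`. Then: (i) `Φ` is a linear isomorphism; (ii) for every
`ω ∈ ⋀²E`, `Φ(C ⊗ ω) = a(ω)`, where `C ∈ E ⊗ E*` is the coevaluation element corresponding to
`Id_E` and `a(u ∧ v) = u ⊗ v − v ⊗ u`; (iii) `Φ` maps `(K·C) ⊗ ⋀²E` onto the antisymmetric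
tensors and maps `End₀ ⊗ ⋀²E` (traceless part, kernel of evaluation) onto the symmetric
tensors. -/
theorem stmt_16 (K : Type*) [Field K] (hK2 : (2 : K) ≠ 0)
    (E : Type*) [AddCommGroup E] [Module K E] [FiniteDimensional K E]
    (hE : Module.finrank K E = 2)
    (iot : Module.Dual K E ⊗[K] (⋀[K]^2 E) →ₗ[K] E)
    (hiot : ∀ (f : Module.Dual K E) (x : ⋀[K]^2 E) (u v : E),
      (x : ExteriorAlgebra K E) = ExteriorAlgebra.ι K u * ExteriorAlgebra.ι K v →
      iot (f ⊗ₜ[K] x) = f u • v - f v • u)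
    (hom : E ⊗[K] Module.Dual K E →ₗ[K] (E →ₗ[K] E))
    (hhom : ∀ (u : E) (f : Module.Dual K E) (x : E), hom (u ⊗ₜ[K] f) x = f x • u)
    (C : E ⊗[K] Module.Dual K E) (hC : hom C = LinearMap.id)
    (ev : E ⊗[K] Module.Dual K E →ₗ[K] K)
    (hev : ∀ (u : E) (f : Module.Dual K E), ev (u ⊗ₜ[K] f) = f u)
    (amap : ⋀[K]^2 E →ₗ[K] E ⊗[K] E)
    (hamap : ∀ (x : ⋀[K]^2 E) (u v : E),
      (x : ExteriorAlgebra K E) = ExteriorAlgebra.ι K u * ExteriorAlgebra.ι K v →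
      amap x = u ⊗ₜ[K] v - v ⊗ₜ[K] u)
    (τ : E ⊗[K] E →ₗ[K] E ⊗[K] E)
    (hτ : ∀ x y : E, τ (x ⊗ₜ[K] y) = y ⊗ₜ[K] x) :
    Function.Bijective (TensorProduct.map (LinearMap.id : E →ₗ[K] E) iot) ∧
    (∀ ω : ⋀[K]^2 E,
      TensorProduct.map (LinearMap.id : E →ₗ[K] E) iot
        (TensorProduct.assoc K E (Module.Dual K E) (⋀[K]^2 E) (C ⊗ₜ[K] ω)) = amap ω) ∧
    Submodule.map ((TensorProduct.map (LinearMap.id : E →ₗ[K] E) iot).comp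
        (TensorProduct.assoc K E (Module.Dual K E) (⋀[K]^2 E)).toLinearMap)
      (Submodule.span K {x : (E ⊗[K] Module.Dual K E) ⊗[K] (⋀[K]^2 E) |
        ∃ ω : ⋀[K]^2 E, x = C ⊗ₜ[K] ω})
      = LinearMap.ker (τ + LinearMap.id) ∧
    Submodule.map ((TensorProduct.map (LinearMap.id : E →ₗ[K] E) iot).comp
        (TensorProduct.assoc K E (Module.Dual K E) (⋀[K]^2 E)).toLinearMap)
      (Submodule.span K {x : (E ⊗[K] Module.Dual K E) ⊗[K] (⋀[K]^2 E) |
        ∃ c ∈ LinearMap.ker ev, ∃ ω : ⋀[K]^2 E, x = c ⊗ₜ[K] ω})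
      = LinearMap.ker (τ - LinearMap.id) := by
  classical
  obtain ⟨b⟩ : Nonempty (Module.Basis (Fin 2) K E) := ⟨Module.finBasisOfFinrankEq K E hE⟩
  set e0 : E := b 0 with he0
  set e1 : E := b 1 with he1
  set f0 : Module.Dual K E := b.coord 0 with hf0
  set f1 : Module.Dual K E := b.coord 1 with hf1
  have hc00 : f0 e0 = 1 := by simp [hf0, he0]
  have hc01 : f0 e1 = 0 := by simp [hf0, he0, he1]
  have hc10 : f1 e0 = 0 := by simp [hf1, he0, he1]
  have hc11 : f1 e1 = 1 := by simp [hf1, he1]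
  set w : ExteriorAlgebra K E := ExteriorAlgebra.ι K e0 * ExteriorAlgebra.ι K e1 with hwdef
  have hw : w ∈ ⋀[K]^2 E := by
    rw [show (⋀[K]^2 E) = LinearMap.range (ExteriorAlgebra.ι K (M := E)) *
      LinearMap.range (ExteriorAlgebra.ι K (M := E)) from pow_two _]
    exact Submodule.mul_mem_mul (LinearMap.mem_range_self _ _) (LinearMap.mem_range_self _ _)
  set ω₀ : ⋀[K]^2 E := ⟨w, hw⟩ with hω₀def
  have hω₀coe : (ω₀ : ExteriorAlgebra K E) = ExteriorAlgebra.ι K e0 * ExteriorAlgebra.ι K e1 := rfl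
  -- every element of ⋀²E is a multiple of ω₀
  have hrepr : ∀ u : E, b.repr u 0 • e0 + b.repr u 1 • e1 = u := by
    intro u
    have := b.sum_repr u
    rwa [Fin.sum_univ_two] at this
  have hω : ∀ ω : ⋀[K]^2 E, ∃ c : K, ω = c • ω₀ := by
    rintro ⟨x, hx⟩
    have hx2 : x ∈ LinearMap.range (ExteriorAlgebra.ι K (M := E)) *
        LinearMap.range (ExteriorAlgebra.ι K (M := E)) := by
      rw [← pow_two]; exact hx
    have : ∃ c : K, x = c • w := by
      refine Submodule.mul_induction_on hx2 ?_ ?_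
      · rintro _ ⟨u, rfl⟩ _ ⟨v, rfl⟩
        obtain ⟨a1, a2, rfl⟩ : ∃ a1 a2 : K, a1 • e0 + a2 • e1 = u :=
          ⟨b.repr u 0, b.repr u 1, hrepr u⟩
        obtain ⟨c1, c2, rfl⟩ : ∃ c1 c2 : K, c1 • e0 + c2 • e1 = v :=
          ⟨b.repr v 0, b.repr v 1, hrepr v⟩
        refine ⟨a1 * c2 - a2 * c1, ?_⟩
        have hswap : ExteriorAlgebra.ι K e1 * ExteriorAlgebra.ι K e0 = -w := by
          rw [hwdef, eq_neg_iff_add_eq_zero, add_comm]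
          exact ExteriorAlgebra.ι_add_mul_swap e0 e1
        simp only [map_add, map_smul, add_mul, mul_add, smul_mul_assoc, mul_smul_comm,
          ExteriorAlgebra.ι_sq_zero, smul_smul, smul_zero, hswap, ← hwdef]
        module
      · rintro x y ⟨cx, hcx⟩ ⟨cy, hcy⟩
        exact ⟨cx + cy, by rw [hcx, hcy, add_smul]⟩
    obtain ⟨c, hc⟩ := this
    exact ⟨c, Subtype.ext (by simpa using hc)⟩
  -- iot on pure tensors with ω₀
  have hiot01 : ∀ f : Module.Dual K E, iot (f ⊗ₜ[K] ω₀) = f e0 • e1 - f e1 • e0 :=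
    fun f => hiot f ω₀ e0 e1 rfl
  have hiotc : ∀ (f : Module.Dual K E) (c : K),
      iot (f ⊗ₜ[K] (c • ω₀)) = (c * f e0) • e1 - (c * f e1) • e0 := by
    intro f c
    rw [tmul_smul, map_smul, hiot01, smul_sub, smul_smul, smul_smul]
  -- normal form in Dual ⊗ ⋀²
  have hj : ∀ x : Module.Dual K E ⊗[K] (⋀[K]^2 E), ∃ f : Module.Dual K E, x = f ⊗ₜ[K] ω₀ := by
    intro x
    induction x using TensorProduct.induction_on with
    | zero => exact ⟨0, by rw [zero_tmul]⟩
    | tmul f ω =>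
      obtain ⟨c, rfl⟩ := hω ω
      exact ⟨c • f, by rw [tmul_smul, smul_tmul']⟩
    | add x y hx hy =>
      obtain ⟨f, rfl⟩ := hx
      obtain ⟨g, rfl⟩ := hy
      exact ⟨f + g, by rw [add_tmul]⟩
  -- iot is bijective
  have hiotbij : Function.Bijective iot := by
    constructor
    · intro x y hxy
      obtain ⟨f, rfl⟩ := hj x
      obtain ⟨g, rfl⟩ := hj y
      rw [hiot01, hiot01] at hxy
      have h0 := congrArg (b.coord 0) hxy
      have h1 := congrArg (b.coord 1) hxy
      simp only [map_sub, map_smul, ← hf0, ← hf1, ← he0, ← he1, hc00, hc01, hc10, hc11,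
        smul_eq_mul, mul_one, mul_zero, sub_zero, zero_sub, neg_eq_iff_eq_neg, neg_neg] at h0 h1
      have : f = g := by
        apply b.ext
        intro i
        fin_cases i
        · simpa [← he0] using h1
        · simpa [← he1] using h0
      rw [this]
    · intro v
      obtain ⟨r0, r1, rfl⟩ : ∃ r0 r1 : K, r0 • e0 + r1 • e1 = v :=
        ⟨b.repr v 0, b.repr v 1, hrepr v⟩
      refine ⟨(r1 • f0 - r0 • f1) ⊗ₜ[K] ω₀, ?_⟩
      rw [hiot01]
      simp only [LinearMap.sub_apply, LinearMap.smul_apply, hc00, hc01, hc10, hc11,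
        smul_eq_mul, mul_one, mul_zero, sub_zero, zero_sub, smul_smul]
      module
  -- (i)
  have part1 : Function.Bijective (TensorProduct.map (LinearMap.id : E →ₗ[K] E) iot) := by
    have heq : TensorProduct.map (LinearMap.id : E →ₗ[K] E) iot =
        (TensorProduct.congr (LinearEquiv.refl K E)
          (LinearEquiv.ofBijective iot hiotbij)).toLinearMap := by
      apply TensorProduct.ext'
      intro u y
      simp [TensorProduct.congr_tmul]
    rw [heq]
    exact (TensorProduct.congr (LinearEquiv.refl K E)
      (LinearEquiv.ofBijective iot hiotbij)).bijective
  -- C is the canonical element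
  have hCeq : C = e0 ⊗ₜ[K] f0 + e1 ⊗ₜ[K] f1 := by
    have hominj : Function.Injective hom := by
      have homeq : hom = (dualTensorHom K E E) ∘ₗ
          (TensorProduct.comm K E (Module.Dual K E)).toLinearMap := by
        apply TensorProduct.ext'
        intro u f
        apply LinearMap.ext
        intro x
        simp [hhom, dualTensorHom_apply]
      rw [homeq]
      intro x y hxy
      simp only [LinearMap.coe_comp, Function.comp_apply, LinearEquiv.coe_coe] at hxy
      have := (dualTensorHomEquivOfBasis (N := E) b).injective
        (a₁ := TensorProduct.comm K E (Module.Dual K E) x)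
        (a₂ := TensorProduct.comm K E (Module.Dual K E) y)
        (by simpa using hxy)
      exact (TensorProduct.comm K E (Module.Dual K E)).injective this
    apply hominj
    rw [hC]
    apply LinearMap.ext
    intro x
    have := hrepr x
    simp only [map_add, LinearMap.add_apply, hhom, LinearMap.id_apply, ← hf0, ← hf1]
    rw [Module.Basis.coord_apply, Module.Basis.coord_apply, ← he0, ← he1] at *
    linear_combination (norm := module) this.symm
  -- (ii)
  have part2 : ∀ ω : ⋀[K]^2 E,
      TensorProduct.map (LinearMap.id : E →ₗ[K] E) iot
        (TensorProduct.assoc K E (Module.Dual K E) (⋀[K]^2 E) (C ⊗ₜ[K] ω)) = amap ω := by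
    intro ω
    obtain ⟨c, rfl⟩ := hω ω
    have ha : amap (c • ω₀) = c • (e0 ⊗ₜ[K] e1 - e1 ⊗ₜ[K] e0) := by
      rw [map_smul, hamap ω₀ e0 e1 rfl]
    rw [hCeq, ha, add_tmul]
    simp only [map_add, TensorProduct.assoc_tmul, TensorProduct.map_tmul, LinearMap.id_coe,
      id_eq, hiotc, hc00, hc01, hc10, hc11, mul_one, mul_zero]
    simp only [tmul_sub, tmul_smul, smul_sub, smul_zero, zero_smul, sub_zero, zero_sub]
    rw [tmul_neg, tmul_smul, ← sub_eq_add_neg]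
  -- repr facts for E ⊗ E
  have hB00 : (b.tensorProduct b) (0, 0) = e0 ⊗ₜ[K] e0 := Module.Basis.tensorProduct_apply b b 0 0
  have hB01 : (b.tensorProduct b) (0, 1) = e0 ⊗ₜ[K] e1 := Module.Basis.tensorProduct_apply b b 0 1
  have hB10 : (b.tensorProduct b) (1, 0) = e1 ⊗ₜ[K] e0 := Module.Basis.tensorProduct_apply b b 1 0
  have hB11 : (b.tensorProduct b) (1, 1) = e1 ⊗ₜ[K] e1 := Module.Basis.tensorProduct_apply b b 1 1
  have hτrepr : ∀ (x : E ⊗[K] E) (i j : Fin 2),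
      (b.tensorProduct b).repr (τ x) (i, j) = (b.tensorProduct b).repr x (j, i) := by
    intro x i j
    have hmap : ((b.tensorProduct b).coord (i, j)) ∘ₗ τ = (b.tensorProduct b).coord (j, i) := by
      apply (b.tensorProduct b).ext
      rintro ⟨k, l⟩
      simp [Module.Basis.coord_apply, Module.Basis.tensorProduct_apply, hτ,
        Module.Basis.tensorProduct_repr_tmul_apply, smul_eq_mul, mul_comm]
    simpa [Module.Basis.coord_apply] using LinearMap.congr_fun hmap x
  have hxsum : ∀ x : E ⊗[K] E,
      (b.tensorProduct b).repr x (0, 0) • e0 ⊗ₜ[K] e0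
        + ((b.tensorProduct b).repr x (0, 1) • e0 ⊗ₜ[K] e1
        + ((b.tensorProduct b).repr x (1, 0) • e1 ⊗ₜ[K] e0
        + (b.tensorProduct b).repr x (1, 1) • e1 ⊗ₜ[K] e1)) = x := by
    intro x
    have h := (b.tensorProduct b).sum_repr x
    rw [Fintype.sum_prod_type, Fin.sum_univ_two, Fin.sum_univ_two, Fin.sum_univ_two,
      hB00, hB01, hB10, hB11] at h
    exact h
  have hamap0 : amap ω₀ = e0 ⊗ₜ[K] e1 - e1 ⊗ₜ[K] e0 := hamap ω₀ e0 e1 rfl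
  have hhalf : ∀ r : K, r + r = 0 → r = 0 := by
    intro r h
    have h2 : (2 : K) * r = 0 := by rw [two_mul]; exact h
    exact (mul_eq_zero.mp h2).resolve_left hK2
  have hcomp : ∀ y : (E ⊗[K] Module.Dual K E) ⊗[K] (⋀[K]^2 E),
      ((TensorProduct.map (LinearMap.id : E →ₗ[K] E) iot).comp
        (TensorProduct.assoc K E (Module.Dual K E) (⋀[K]^2 E)).toLinearMap) y
      = TensorProduct.map (LinearMap.id : E →ₗ[K] E) iot
        (TensorProduct.assoc K E (Module.Dual K E) (⋀[K]^2 E) y) := fun y => rfl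
  -- (iii) antisymmetric part
  have part3 : Submodule.map ((TensorProduct.map (LinearMap.id : E →ₗ[K] E) iot).comp
        (TensorProduct.assoc K E (Module.Dual K E) (⋀[K]^2 E)).toLinearMap)
      (Submodule.span K {x : (E ⊗[K] Module.Dual K E) ⊗[K] (⋀[K]^2 E) |
        ∃ ω : ⋀[K]^2 E, x = C ⊗ₜ[K] ω})
      = LinearMap.ker (τ + LinearMap.id) := by
    apply le_antisymm
    · rw [Submodule.map_span_le]
      rintro m ⟨ω, rfl⟩
      rw [LinearMap.mem_ker, hcomp, part2, LinearMap.add_apply, LinearMap.id_apply]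
      obtain ⟨c, rfl⟩ := hω ω
      rw [map_smul, hamap0]
      simp only [smul_sub, map_sub, map_smul, hτ]
      abel
    · rintro x hx
      rw [LinearMap.mem_ker, LinearMap.add_apply, LinearMap.id_apply] at hx
      have hτx : τ x = -x := eq_neg_of_add_eq_zero_left hx
      have key : ∀ i j : Fin 2,
          (b.tensorProduct b).repr x (j, i) = -(b.tensorProduct b).repr x (i, j) := by
        intro i j
        have h := hτrepr x i j
        rw [hτx] at h
        simpa using h.symm
      have r00 : (b.tensorProduct b).repr x (0, 0) = 0 :=
        hhalf _ (eq_neg_iff_add_eq_zero.mp (key 0 0))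
      have r11 : (b.tensorProduct b).repr x (1, 1) = 0 :=
        hhalf _ (eq_neg_iff_add_eq_zero.mp (key 1 1))
      have r10 : (b.tensorProduct b).repr x (1, 0) = -(b.tensorProduct b).repr x (0, 1) :=
        key 0 1
      refine ⟨C ⊗ₜ[K] ((b.tensorProduct b).repr x (0, 1) • ω₀),
        Submodule.subset_span ⟨_, rfl⟩, ?_⟩
      rw [hcomp, part2, map_smul, hamap0]
      conv_rhs => rw [← hxsum x]
      rw [r00, r11, r10]
      module
  -- key identity for the symmetric part
  have hsym : ∀ cc : E ⊗[K] Module.Dual K E,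
      τ (TensorProduct.map (LinearMap.id : E →ₗ[K] E) iot
          (TensorProduct.assoc K E (Module.Dual K E) (⋀[K]^2 E) (cc ⊗ₜ[K] ω₀)))
        - TensorProduct.map (LinearMap.id : E →ₗ[K] E) iot
          (TensorProduct.assoc K E (Module.Dual K E) (⋀[K]^2 E) (cc ⊗ₜ[K] ω₀))
        = ev cc • (e1 ⊗ₜ[K] e0 - e0 ⊗ₜ[K] e1) := by
    intro cc
    induction cc using TensorProduct.induction_on with
    | zero => simp
    | tmul u f =>
      obtain ⟨r0, r1, rfl⟩ : ∃ r0 r1 : K, r0 • e0 + r1 • e1 = u :=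
        ⟨b.repr u 0, b.repr u 1, hrepr u⟩
      rw [TensorProduct.assoc_tmul, TensorProduct.map_tmul, LinearMap.id_coe, id_eq, hiot01,
        hev]
      simp only [map_add, map_smul, add_tmul, smul_tmul', tmul_sub, tmul_smul, smul_sub,
        smul_add, smul_smul, map_sub, hτ, smul_eq_mul]
      simp only [← smul_tmul']
      module
    | add x y hx hy =>
      rw [add_tmul, map_add, map_add, map_add, map_add ev x y, add_smul, ← hx, ← hy]
      abel
  have hχ : ∀ cc : E ⊗[K] Module.Dual K E,
      (((TensorProduct.map (LinearMap.id : E →ₗ[K] E) iot).comp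
        (TensorProduct.assoc K E (Module.Dual K E) (⋀[K]^2 E)).toLinearMap).comp
        ((TensorProduct.mk K (E ⊗[K] Module.Dual K E) (⋀[K]^2 E)).flip ω₀)) cc
      = TensorProduct.map (LinearMap.id : E →ₗ[K] E) iot
        (TensorProduct.assoc K E (Module.Dual K E) (⋀[K]^2 E) (cc ⊗ₜ[K] ω₀)) := fun _ => rfl
  have hχt : ∀ (u : E) (f : Module.Dual K E),
      (((TensorProduct.map (LinearMap.id : E →ₗ[K] E) iot).comp
        (TensorProduct.assoc K E (Module.Dual K E) (⋀[K]^2 E)).toLinearMap).comp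
        ((TensorProduct.mk K (E ⊗[K] Module.Dual K E) (⋀[K]^2 E)).flip ω₀)) (u ⊗ₜ[K] f)
      = u ⊗ₜ[K] (f e0 • e1 - f e1 • e0) := by
    intro u f
    rw [hχ, TensorProduct.assoc_tmul, TensorProduct.map_tmul, LinearMap.id_coe, id_eq, hiot01]
  -- (iii) symmetric part
  have part4 : Submodule.map ((TensorProduct.map (LinearMap.id : E →ₗ[K] E) iot).comp
        (TensorProduct.assoc K E (Module.Dual K E) (⋀[K]^2 E)).toLinearMap)
      (Submodule.span K {x : (E ⊗[K] Module.Dual K E) ⊗[K] (⋀[K]^2 E) |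
        ∃ c ∈ LinearMap.ker ev, ∃ ω : ⋀[K]^2 E, x = c ⊗ₜ[K] ω})
      = LinearMap.ker (τ - LinearMap.id) := by
    apply le_antisymm
    · rw [Submodule.map_span_le]
      rintro m ⟨c, hc, ω, rfl⟩
      rw [LinearMap.mem_ker, hcomp, LinearMap.sub_apply, LinearMap.id_apply]
      obtain ⟨lam, rfl⟩ := hω ω
      have h := hsym c
      rw [LinearMap.mem_ker.mp hc, zero_smul, sub_eq_zero] at h
      rw [tmul_smul, map_smul, map_smul, map_smul, h, sub_self]
    · rintro x hx
      rw [LinearMap.mem_ker, LinearMap.sub_apply, LinearMap.id_apply, sub_eq_zero] at hx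
      have key : ∀ i j : Fin 2,
          (b.tensorProduct b).repr x (j, i) = (b.tensorProduct b).repr x (i, j) := by
        intro i j
        have h := hτrepr x i j
        rw [hx] at h
        exact h.symm
      set r00 := (b.tensorProduct b).repr x (0, 0) with hr00
      set r01 := (b.tensorProduct b).repr x (0, 1) with hr01
      set r11 := (b.tensorProduct b).repr x (1, 1) with hr11
      have r10 : (b.tensorProduct b).repr x (1, 0) = r01 := key 0 1
      refine ⟨(r01 • (e0 ⊗ₜ[K] f0) - r00 • (e0 ⊗ₜ[K] f1)
          + r11 • (e1 ⊗ₜ[K] f0) - r01 • (e1 ⊗ₜ[K] f1)) ⊗ₜ[K] ω₀,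
        Submodule.subset_span ⟨_, ?_, ω₀, rfl⟩, ?_⟩
      · rw [LinearMap.mem_ker]
        simp only [map_add, map_sub, map_smul, hev, hc00, hc01, hc10, hc11, smul_eq_mul,
          mul_one, mul_zero]
        ring
      · rw [hcomp, ← hχ, map_sub, map_add, map_sub, map_smul, map_smul, map_smul, map_smul,
          hχt, hχt, hχt, hχt]
        simp only [hc00, hc01, hc10, hc11, one_smul, zero_smul, sub_zero, zero_sub,
          tmul_sub, tmul_smul, tmul_neg, smul_sub, smul_neg]
        conv_rhs => rw [← hxsum x]
        rw [r10, ← hr00, ← hr01, ← hr11]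
        module
  exact ⟨part1, part2, part3, part4⟩
end
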